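/- Let D be an additively idempotent division semiring. Every finite left D-semimodule (i.e., one whose underlying set is finite) is e-injective. -/

import Mathlib

universe u v w w'

/-- A subsemimodule `A ≤ B` is subtractive if `m ∈ A` and `m + m' ∈ A` imply `m' ∈ A`. -/
def IsSubtractive {S : Type u} [Semiring S] {B : Type v} [AddCommMonoid B] [Module S B]
    (A : Submodule S B) : Prop :=
  ∀ m m' : B, m ∈ A → m + m' ∈ A → m' ∈ A

/-- A left `S`-semimodule `M` is e-injective if for every semimodule `B` and every
subtractive subsemimodule `A ≤ B`, every linear map `A → M` extends to `B`, and any two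
linear maps `B → M` agreeing on `A` differ by maps vanishing on `A`. -/
def EInjective (S : Type u) [Semiring S] (M : Type v) [AddCommMonoid M] [Module S M] : Prop :=
  ∀ (B : Type w) [AddCommMonoid B] [Module S B] (A : Submodule S B), IsSubtractive A →
    ((∀ φ : A →ₗ[S] M, ∃ ψ : B →ₗ[S] M, ∀ a : A, ψ (a : B) = φ a) ∧
     (∀ ψ₁ ψ₂ : B →ₗ[S] M, (∀ a ∈ A, ψ₁ a = ψ₂ a) →
       ∃ χ₁ χ₂ : B →ₗ[S] M, (∀ a ∈ A, χ₁ a = 0) ∧ (∀ a ∈ A, χ₂ a = 0) ∧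
         ψ₁ + χ₁ = ψ₂ + χ₂))

/-- A left `S`-semimodule `M` is injective if every linear map into `M` extends along
every injective linear map. -/
def SInjective (S : Type u) [Semiring S] (M : Type v) [AddCommMonoid M] [Module S M] : Prop :=
  ∀ (A : Type w) (B : Type w') [AddCommMonoid A] [Module S A] [AddCommMonoid B] [Module S B]
    (μ : A →ₗ[S] B), Function.Injective μ →
    ∀ φ : A →ₗ[S] M, ∃ ψ : B →ₗ[S] M, ∀ a : A, ψ (μ a) = φ a

/-- Theorem 4.4(4): every finite semimodule over an additively idempotent division
semiring is e-injective. -/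
theorem eInjective_of_finite_of_divisionSemiring {D : Type u} [DivisionSemiring D]
    (hai : ∀ a : D, a + a = a)
    (M : Type v) [AddCommMonoid M] [Module D M] [Finite M] :
    EInjective D M := by
  classical
  intro B _ _ A hA
  have h11 : (1 : D) + 1 = 1 := hai 1
  have hBidem : ∀ b : B, b + b = b := by
    intro b
    calc b + b = ((1 : D) + 1) • b := by rw [add_smul, one_smul]
    _ = b := by rw [h11, one_smul]
  have hMidem : ∀ m : M, m + m = m := by
    intro m
    calc m + m = ((1 : D) + 1) • m := by rw [add_smul, one_smul]
    _ = m := by rw [h11, one_smul]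
  -- A is "downward closed"
  have hdown : ∀ b b' : B, b + b' ∈ A → b' ∈ A := by
    intro b b' h
    refine hA (b + b') b' h ?_
    have h2 : b + b' + b' = b + b' := by rw [add_assoc, hBidem]
    rwa [h2]
  cases nonempty_fintype M
  set T : M := ∑ x : M, x with hTdef
  have hT : ∀ m : M, m + T = T := by
    intro m
    have h1 : m + ∑ x ∈ Finset.univ.erase m, x = T :=
      Finset.add_sum_erase _ (fun x => x) (Finset.mem_univ m)
    rw [← h1, ← add_assoc, hMidem]
  have hTs : ∀ s : D, s ≠ 0 → s • T = T := by
    intro s hs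
    rw [hTdef, Finset.smul_sum]
    exact Fintype.sum_equiv
      ⟨fun x => s • x, fun x => s⁻¹ • x, fun x => inv_smul_smul₀ hs x,
        fun x => smul_inv_smul₀ hs x⟩ _ _ (fun x => rfl)
  have hsmem : ∀ (s : D), s ≠ 0 → ∀ b : B, s • b ∈ A → b ∈ A := by
    intro s hs b hb
    have h := A.smul_mem s⁻¹ hb
    rwa [inv_smul_smul₀ hs] at h
  constructor
  · -- extension property
    intro φ
    refine ⟨⟨⟨fun b => if h : b ∈ A then φ ⟨b, h⟩ else T, ?_⟩, ?_⟩, ?_⟩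
    · intro b b'
      by_cases h : b + b' ∈ A
      · have hb : b ∈ A := hdown b' b (by rwa [add_comm])
        have hb' : b' ∈ A := hdown b b' h
        rw [dif_pos h, dif_pos hb, dif_pos hb']
        have h3 : (⟨b + b', h⟩ : A) = ⟨b, hb⟩ + ⟨b', hb'⟩ := rfl
        rw [h3, map_add]
      · rw [dif_neg h]
        by_cases hb : b ∈ A
        · have hb' : b' ∉ A := fun hb' => h (A.add_mem hb hb')
          rw [dif_pos hb, dif_neg hb', hT]
        · rw [dif_neg hb, add_comm]
          exact (hT _).symm
    · intro s b
      dsimp only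
      simp only [RingHom.id_apply]
      rcases eq_or_ne s 0 with rfl | hs
      · rw [zero_smul, zero_smul, dif_pos A.zero_mem]
        have h0 : (⟨(0 : B), A.zero_mem⟩ : A) = 0 := rfl
        rw [h0, map_zero]
      · by_cases hb : b ∈ A
        · have hsb : s • b ∈ A := A.smul_mem s hb
          rw [dif_pos hsb, dif_pos hb]
          have h3 : (⟨s • b, hsb⟩ : A) = s • (⟨b, hb⟩ : A) := rfl
          rw [h3, map_smul]
        · have hsb : s • b ∉ A := fun h => hb (hsmem s hs b h)
          rw [dif_neg hsb, dif_neg hb, hTs s hs]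
    · intro a
      simp only [LinearMap.coe_mk, AddHom.coe_mk]
      rw [dif_pos a.2]
  · -- the difference property
    intro ψ₁ ψ₂ hagree
    have hχ : ∃ χ : B →ₗ[D] M, ∀ b : B, χ b = if b ∈ A then 0 else T := by
      refine ⟨⟨⟨fun b => if b ∈ A then 0 else T, ?_⟩, ?_⟩, fun b => rfl⟩
      · intro b b'
        by_cases h : b + b' ∈ A
        · have hb : b ∈ A := hdown b' b (by rwa [add_comm])
          have hb' : b' ∈ A := hdown b b' h
          rw [if_pos h, if_pos hb, if_pos hb', add_zero]
        · rw [if_neg h]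
          by_cases hb : b ∈ A
          · have hb' : b' ∉ A := fun hb' => h (A.add_mem hb hb')
            rw [if_pos hb, if_neg hb', zero_add]
          · rw [if_neg hb, add_comm]
            exact (hT _).symm
      · intro s b
        dsimp only
        simp only [RingHom.id_apply]
        rcases eq_or_ne s 0 with rfl | hs
        · rw [zero_smul, zero_smul, if_pos A.zero_mem]
        · by_cases hb : b ∈ A
          · have hsb : s • b ∈ A := A.smul_mem s hb
            rw [if_pos hsb, if_pos hb, smul_zero]
          · have hsb : s • b ∉ A := fun h => hb (hsmem s hs b h)
            rw [if_neg hsb, if_neg hb, hTs s hs]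
    obtain ⟨χ, hχval⟩ := hχ
    refine ⟨χ, χ, fun a ha => by rw [hχval, if_pos ha], fun a ha => by rw [hχval, if_pos ha], ?_⟩
    ext b
    simp only [LinearMap.add_apply, hχval]
    by_cases hb : b ∈ A
    · rw [if_pos hb, add_zero, add_zero, hagree b hb]
    · rw [if_neg hb, hT, hT]
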